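/- Let a, b, D be real numbers with a ≠ 0 and D > 0, and set c = b²/(4a) − a D². Let I ⊆ ℝ be a nonempty open interval and let Φ : I → ℝ be twice differentiable with Φ''(t) = a·Φ'(t)² + b·Φ'(t) + c for all t ∈ I, and suppose |Φ'(t₀) + b/(2a)| < D for some t₀ ∈ I. Then there exist ξ > 0 and κ ∈ ℝ such that Φ(t) = −(1/a)·( log(1 + ξ e^{2aDt}) + (b/2 − Da)·t ) + κ for all t ∈ I. -/

import Mathlib

open Set Real

/-- If `f` has derivative `0` at every point of an open interval, it is constant there. -/
lemma constOnIoo {f : ℝ → ℝ} {x y : ℝ}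
    (hf : ∀ t ∈ Set.Ioo x y, HasDerivAt f 0 t)
    {s t : ℝ} (hs : s ∈ Set.Ioo x y) (ht : t ∈ Set.Ioo x y) : f t = f s := by
  have key : ∀ p q : ℝ, p ∈ Set.Ioo x y → q ∈ Set.Ioo x y → p ≤ q → f q = f p := by
    intro p q hp hq hpq
    have hsub : Set.Icc p q ⊆ Set.Ioo x y := fun z hz =>
      ⟨lt_of_lt_of_le hp.1 hz.1, lt_of_le_of_lt hz.2 hq.2⟩
    have hcont : ContinuousOn f (Set.Icc p q) := fun z hz =>
      ((hf z (hsub hz)).continuousAt).continuousWithinAt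
    have hderiv : ∀ z ∈ Set.Ico p q, HasDerivWithinAt f 0 (Set.Ici z) z := fun z hz =>
      (hf z (hsub ⟨hz.1, le_of_lt hz.2⟩)).hasDerivWithinAt
    exact constant_of_has_deriv_right_zero hcont hderiv q (Set.right_mem_Icc.2 hpq)
  rcases le_total s t with h | h
  · exact key s t hs ht h
  · exact (key t s ht hs h).symm

theorem stmt_9 (a b D : ℝ) (ha : a ≠ 0) (hD : 0 < D)
    (c : ℝ) (hc : c = b ^ 2 / (4 * a) - a * D ^ 2)
    (I : Set ℝ) (hI : I.Nonempty) (hIab : ∃ x y : ℝ, I = Set.Ioo x y)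
    (Φ : ℝ → ℝ)
    (hΦ₁ : ∀ t ∈ I, DifferentiableAt ℝ Φ t)
    (hΦ₂ : ∀ t ∈ I, DifferentiableAt ℝ (deriv Φ) t)
    (hode : ∀ t ∈ I, deriv (deriv Φ) t = a * (deriv Φ t) ^ 2 + b * deriv Φ t + c)
    (hpt : ∃ t₀ ∈ I, |deriv Φ t₀ + b / (2 * a)| < D) :
    ∃ ξ : ℝ, 0 < ξ ∧ ∃ κ : ℝ, ∀ t ∈ I,
      Φ t = -(1 / a) * (Real.log (1 + ξ * Real.exp (2 * a * D * t))
              + (b / 2 - D * a) * t) + κ := by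
  obtain ⟨x, y, rfl⟩ := hIab
  obtain ⟨t₀, ht₀, hpt⟩ := hpt
  set ψ : ℝ → ℝ := fun t => deriv Φ t + b / (2 * a) with hψdef
  -- derivative of ψ
  have hψ : ∀ t ∈ Set.Ioo x y, HasDerivAt ψ (a * ((ψ t) ^ 2 - D ^ 2)) t := by
    intro t ht
    have h2 : HasDerivAt (deriv Φ) (deriv (deriv Φ) t) t := (hΦ₂ t ht).hasDerivAt
    rw [hode t ht] at h2
    have h3 : HasDerivAt ψ (a * (deriv Φ t) ^ 2 + b * deriv Φ t + c) t :=
      h2.add_const _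
    convert h3 using 1
    simp only [hψdef, hc]
    field_simp
    ring
  -- integrating factors
  set F : ℝ → ℝ := fun t => a * Φ t + (b / 2 + a * D) * t with hFdef
  set G : ℝ → ℝ := fun t => -a * Φ t + (a * D - b / 2) * t with hGdef
  have hF : ∀ t ∈ Set.Ioo x y, HasDerivAt F (a * (D + ψ t)) t := by
    intro t ht
    have h1 : HasDerivAt (fun t => a * Φ t) (a * deriv Φ t) t :=
      ((hΦ₁ t ht).hasDerivAt).const_mul a
    have h2 : HasDerivAt (fun t => (b / 2 + a * D) * t) (b / 2 + a * D) t := by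
      simpa using (hasDerivAt_id t).const_mul (b / 2 + a * D)
    have h3 := h1.add h2
    refine h3.congr_deriv ?_
    symm
    simp only [hψdef]
    field_simp
    ring
  have hG : ∀ t ∈ Set.Ioo x y, HasDerivAt G (a * (D - ψ t)) t := by
    intro t ht
    have h1 : HasDerivAt (fun t => -a * Φ t) (-a * deriv Φ t) t :=
      ((hΦ₁ t ht).hasDerivAt).const_mul (-a)
    have h2 : HasDerivAt (fun t => (a * D - b / 2) * t) (a * D - b / 2) t := by
      simpa using (hasDerivAt_id t).const_mul (a * D - b / 2)
    have h3 := h1.add h2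
    refine h3.congr_deriv ?_
    symm
    simp only [hψdef]
    field_simp
    ring
  set P : ℝ → ℝ := fun t => (D - ψ t) * Real.exp (-F t) with hPdef
  set Q : ℝ → ℝ := fun t => (D + ψ t) * Real.exp (G t) with hQdef
  have hP : ∀ t ∈ Set.Ioo x y, HasDerivAt P 0 t := by
    intro t ht
    have h1 : HasDerivAt (fun t => D - ψ t) (-(a * ((ψ t) ^ 2 - D ^ 2))) t :=
      (hψ t ht).const_sub D
    have h2 : HasDerivAt (fun t => Real.exp (-F t)) (Real.exp (-F t) * (-(a * (D + ψ t)))) t :=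
      ((hF t ht).neg).exp
    have h3 := h1.mul h2
    refine h3.congr_deriv ?_
    ring
  have hQ : ∀ t ∈ Set.Ioo x y, HasDerivAt Q 0 t := by
    intro t ht
    have h1 : HasDerivAt (fun t => D + ψ t) (a * ((ψ t) ^ 2 - D ^ 2)) t :=
      (hψ t ht).const_add D
    have h2 : HasDerivAt (fun t => Real.exp (G t)) (Real.exp (G t) * (a * (D - ψ t))) t :=
      (hG t ht).exp
    have h3 := h1.mul h2
    refine h3.congr_deriv ?_
    ring
  have habs := abs_lt.mp hpt
  have hu0 : 0 < D - ψ t₀ := by simp only [hψdef]; linarith [habs.2]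
  have hv0 : 0 < D + ψ t₀ := by simp only [hψdef]; linarith [habs.1]
  -- constancy
  have hPc : ∀ t ∈ Set.Ioo x y, P t = P t₀ := fun t ht => constOnIoo hP ht₀ ht
  have hQc : ∀ t ∈ Set.Ioo x y, Q t = Q t₀ := fun t ht => constOnIoo hQ ht₀ ht
  have hu : ∀ t ∈ Set.Ioo x y, D - ψ t = (D - ψ t₀) * Real.exp (F t - F t₀) := by
    intro t ht
    have h := hPc t ht
    simp only [hPdef] at h
    have he : Real.exp (-F t) ≠ 0 := Real.exp_ne_zero _
    have : (D - ψ t) * Real.exp (-F t) * Real.exp (F t)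
        = (D - ψ t₀) * Real.exp (-F t₀) * Real.exp (F t) := by rw [h]
    rw [mul_assoc, ← Real.exp_add, mul_assoc, ← Real.exp_add] at this
    simpa [sub_eq_add_neg, add_comm] using this
  have hv : ∀ t ∈ Set.Ioo x y, D + ψ t = (D + ψ t₀) * Real.exp (G t₀ - G t) := by
    intro t ht
    have h := hQc t ht
    simp only [hQdef] at h
    have : (D + ψ t) * Real.exp (G t) * Real.exp (-G t)
        = (D + ψ t₀) * Real.exp (G t₀) * Real.exp (-G t) := by rw [h]
    rw [mul_assoc, ← Real.exp_add, mul_assoc, ← Real.exp_add] at this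
    simpa [sub_eq_add_neg, add_comm] using this
  have hupos : ∀ t ∈ Set.Ioo x y, 0 < D - ψ t := fun t ht => by
    rw [hu t ht]; positivity
  have hvpos : ∀ t ∈ Set.Ioo x y, 0 < D + ψ t := fun t ht => by
    rw [hv t ht]; positivity
  -- the constant ξ
  set ξ : ℝ := (D - ψ t₀) / (D + ψ t₀) * Real.exp (-(2 * a * D * t₀)) with hξdef
  have hξpos : 0 < ξ := by positivity
  refine ⟨ξ, hξpos, ?_⟩
  -- key relation
  have hFG : ∀ t, F t + G t = 2 * a * D * t := by
    intro t; simp only [hFdef, hGdef]; ring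
  have hkey : ∀ t ∈ Set.Ioo x y,
      D - ψ t = ξ * Real.exp (2 * a * D * t) * (D + ψ t) := by
    intro t ht
    rw [hu t ht, hv t ht, hξdef]
    rw [div_mul_eq_mul_div, div_mul_eq_mul_div, div_mul_eq_mul_div]
    rw [mul_div_assoc]
    rw [mul_div_assoc]
    have hne : D + ψ t₀ ≠ 0 := ne_of_gt hv0
    field_simp
    have hexp : Real.exp (-(2 * a * D * t₀)) * (Real.exp (2 * a * D * t) * Real.exp (G t₀ - G t))
        = Real.exp (F t - F t₀) := by
      rw [← Real.exp_add, ← Real.exp_add]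
      congr 1
      have h1 := hFG t
      have h2 := hFG t₀
      linarith
    rw [← hexp]; ring_nf
  -- the explicit solution T
  set T : ℝ → ℝ := fun t => -(1 / a) * (Real.log (1 + ξ * Real.exp (2 * a * D * t))
      + (b / 2 - D * a) * t) with hTdef
  have hwpos : ∀ t : ℝ, 0 < 1 + ξ * Real.exp (2 * a * D * t) := by
    intro t; positivity
  have hT : ∀ t ∈ Set.Ioo x y, HasDerivAt T (deriv Φ t) t := by
    intro t ht
    set w : ℝ := ξ * Real.exp (2 * a * D * t) with hwdef
    have hinner : HasDerivAt (fun s => 1 + ξ * Real.exp (2 * a * D * s))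
        (ξ * (Real.exp (2 * a * D * t) * (2 * a * D))) t := by
      have h1 : HasDerivAt (fun s : ℝ => 2 * a * D * s) (2 * a * D) t := by
        simpa using (hasDerivAt_id t).const_mul (2 * a * D)
      exact ((h1.exp).const_mul ξ).const_add 1
    have hlog : HasDerivAt (fun s => Real.log (1 + ξ * Real.exp (2 * a * D * s)))
        (ξ * (Real.exp (2 * a * D * t) * (2 * a * D)) / (1 + ξ * Real.exp (2 * a * D * t))) t :=
      hinner.log (ne_of_gt (hwpos t))
    have hlin : HasDerivAt (fun s : ℝ => (b / 2 - D * a) * s) (b / 2 - D * a) t := by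
      simpa using (hasDerivAt_id t).const_mul (b / 2 - D * a)
    have h3 := (hlog.add hlin).const_mul (-(1 / a))
    refine h3.congr_deriv ?_
    symm
    -- show deriv Φ t equals the computed derivative
    have hk := hkey t ht
    have h1w : (0:ℝ) < 1 + w := hwpos t
    have hψt : deriv Φ t = ψ t - b / (2 * a) := by simp [hψdef]
    rw [hψt]
    rw [← hwdef]
    have h1wne : (1 : ℝ) + w ≠ 0 := ne_of_gt h1w
    field_simp
    rw [hwdef]
    linear_combination (-(2 * a)) * hk
  -- conclude by constancy of Φ - T
  have hH : ∀ t ∈ Set.Ioo x y, HasDerivAt (fun t => Φ t - T t) 0 t := by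
    intro t ht
    have := ((hΦ₁ t ht).hasDerivAt).sub (hT t ht)
    exact this.congr_deriv (sub_self _)
  refine ⟨Φ t₀ - T t₀, fun t ht => ?_⟩
  have := constOnIoo hH ht₀ ht
  have hTt : T t = -(1 / a) * (Real.log (1 + ξ * Real.exp (2 * a * D * t))
      + (b / 2 - D * a) * t) := rfl
  linarith [this, hTt ▸ (le_refl (T t))]
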